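/- Let m ∈ ℕ and A ⊆ ℕ^m be a complete set of multi-indices. Let GP = ⊕_{i=1}^m P_i be generating nodes, where each P_i = {p_{0,i},…,p_{n_i,i}} ⊆ ℝ is a set of n_i + 1 pairwise distinct reals with n_i = max_{α∈A} α_i. Then the node set P_A = { (p_{α_1,1},…,p_{α_m,m}) : α ∈ A } is unisolvent with respect to Π_A. -/

import Mathlib

open MvPolynomial
open scoped Classical

noncomputable section

/-- The polynomial space `Π_A` spanned by the monomials `x^α`, `α ∈ A`. -/
def PiA (m : ℕ) (A : Finset (Fin m → ℕ)) : Submodule ℝ (MvPolynomial (Fin m) ℝ) :=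
  Submodule.span ℝ ((fun α : Fin m → ℕ => ∏ i, X i ^ α i) '' ↑A)

/-- `A ⊆ ℕ^m` is a complete (downward closed) set of multi-indices. -/
def CompleteIdx {m : ℕ} (A : Finset (Fin m → ℕ)) : Prop :=
  ∀ α ∈ A, ∀ β : Fin m → ℕ, (∀ i, β i ≤ α i) → β ∈ A

/-- The node `p_α = (p_{α₁,1},…,p_{α_m,m})` generated from generating nodes `p`. -/
def node {m : ℕ} (p : Fin m → ℕ → ℝ) (α : Fin m → ℕ) : Fin m → ℝ := fun i => p i (α i)

/-- The generating nodes `p_{0,i},…,p_{n_i,i}`, `n_i = max_{α∈A} α_i`, are pairwise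
distinct in each dimension `i` (essential assumptions, Definition 2.8). -/
def GenDistinct {m : ℕ} (A : Finset (Fin m → ℕ)) (p : Fin m → ℕ → ℝ) : Prop :=
  ∀ i : Fin m, ∀ j k : ℕ, j ≤ A.sup (fun α => α i) → k ≤ A.sup (fun α => α i) →
    p i j = p i k → j = k

/-- The multivariate Newton polynomial `N_α(x) = ∏_i ∏_{j<α_i} (x_i - p_{j,i})`. -/
def newton {m : ℕ} (p : Fin m → ℕ → ℝ) (α : Fin m → ℕ) : MvPolynomial (Fin m) ℝ :=
  ∏ i, ∏ j ∈ Finset.range (α i), (X i - C (p i j))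

/-- `P` is unisolvent with respect to the polynomial subspace `W`: the only
polynomial in `W` vanishing on all of `P` is `0`. -/
def Unisolvent {m : ℕ} (P : Set (Fin m → ℝ)) (W : Submodule ℝ (MvPolynomial (Fin m) ℝ)) :
    Prop :=
  ∀ Q ∈ W, (∀ x ∈ P, eval x Q = 0) → Q = 0

section Aux

variable {m : ℕ}

lemma newton_degreeOf_le (p : Fin m → ℕ → ℝ) (α : Fin m → ℕ) (i : Fin m) :
    degreeOf i (newton p α) ≤ α i := by
  calc degreeOf i (newton p α)
      ≤ ∑ k, degreeOf i (∏ j ∈ Finset.range (α k), (X k - C (p k j))) :=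
        degreeOf_prod_le i _ _
    _ ≤ ∑ k, ∑ j ∈ Finset.range (α k),
          degreeOf i ((X k : MvPolynomial (Fin m) ℝ) - C (p k j)) :=
        Finset.sum_le_sum fun k _ => degreeOf_prod_le i _ _
    _ ≤ ∑ k, ∑ _j ∈ Finset.range (α k), (if i = k then 1 else 0) := by
        refine Finset.sum_le_sum fun k _ => Finset.sum_le_sum fun j _ => ?_
        refine (degreeOf_sub_le i _ _).trans ?_
        simp [degreeOf_X, degreeOf_C]
    _ = ∑ k, (if i = k then α k else 0) := by
        refine Finset.sum_congr rfl fun k _ => ?_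
        split_ifs <;> simp
    _ = α i := by rw [Finset.sum_ite_eq]; simp

lemma newton_mem_PiA {A : Finset (Fin m → ℕ)} (hA : CompleteIdx A)
    (p : Fin m → ℕ → ℝ) {α : Fin m → ℕ} (hα : α ∈ A) :
    newton p α ∈ PiA m A := by
  rw [(newton p α).as_sum]
  refine Submodule.sum_mem _ fun d hd => ?_
  have hdA : (⇑d : Fin m → ℕ) ∈ A := by
    refine hA α hα _ fun i => ?_
    exact (monomial_le_degreeOf i hd).trans (newton_degreeOf_le p α i)
  have hmon : (monomial d (coeff d (newton p α)) : MvPolynomial (Fin m) ℝ)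
      = (coeff d (newton p α)) • ∏ i, (X i : MvPolynomial (Fin m) ℝ) ^ d i := by
    rw [smul_eq_C_mul, monomial_eq]
    congr 1
    rw [Finsupp.prod]
    exact Finset.prod_subset (Finset.subset_univ _) fun i _ hni => by
      rw [Finsupp.notMem_support_iff.mp hni, pow_zero]
  rw [hmon]
  exact Submodule.smul_mem _ _ (Submodule.subset_span ⟨⇑d, hdA, rfl⟩)

lemma eval_newton_node (p : Fin m → ℕ → ℝ) (β α : Fin m → ℕ) :
    eval (node p β) (newton p α) = ∏ i, ∏ j ∈ Finset.range (α i), (p i (β i) - p i j) := by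
  simp [newton, node, eval_prod]

lemma eval_newton_eq_zero (p : Fin m → ℕ → ℝ) {α β : Fin m → ℕ} (h : ∃ i, β i < α i) :
    eval (node p β) (newton p α) = 0 := by
  obtain ⟨i, hi⟩ := h
  rw [eval_newton_node]
  refine Finset.prod_eq_zero (Finset.mem_univ i) ?_
  refine Finset.prod_eq_zero (Finset.mem_range.mpr hi) ?_
  exact sub_self _

lemma eval_newton_self_ne_zero {A : Finset (Fin m → ℕ)} (p : Fin m → ℕ → ℝ)
    (hp : GenDistinct A p) {α : Fin m → ℕ} (hα : α ∈ A) :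
    eval (node p α) (newton p α) ≠ 0 := by
  rw [eval_newton_node, Finset.prod_ne_zero_iff]
  intro i _
  rw [Finset.prod_ne_zero_iff]
  intro j hj
  rw [Finset.mem_range] at hj
  intro h0
  have heq : p i (α i) = p i j := sub_eq_zero.mp h0
  have := hp i (α i) j (Finset.le_sup (f := fun α => α i) hα) ((le_of_lt hj).trans (Finset.le_sup (f := fun α => α i) hα)) heq
  omega

lemma key_triangular {A : Finset (Fin m → ℕ)} (p : Fin m → ℕ → ℝ) (hp : GenDistinct A p)
    (l : (Fin m → ℕ) →₀ ℝ) (hsupp : ↑l.support ⊆ (↑A : Set (Fin m → ℕ)))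
    (hev : ∀ β ∈ A, eval (node p β) (Finsupp.linearCombination ℝ (newton p) l) = 0) :
    l = 0 := by
  have main : ∀ n (β : Fin m → ℕ), β ∈ A → (∑ i, β i) = n → l β = 0 := by
    intro n
    induction n using Nat.strong_induction_on with
    | _ n ih =>
      intro β hβ hn
      have h0 := hev β hβ
      rw [Finsupp.linearCombination_apply, Finsupp.sum, map_sum] at h0
      have hterm : ∀ α ∈ l.support, α ≠ β →
          eval (node p β) (l α • newton p α) = 0 := by
        intro α hαs hne
        by_cases hle : ∀ i, α i ≤ β i
        · have hαA : α ∈ A := hsupp hαs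
          have hex : ∃ i, α i < β i := by
            by_contra hc
            push_neg at hc
            exact hne (funext fun i => le_antisymm (hle i) (hc i))
          obtain ⟨i0, hi0⟩ := hex
          have hlt : (∑ i, α i) < n := by
            rw [← hn]
            exact Finset.sum_lt_sum (fun i _ => hle i) ⟨i0, Finset.mem_univ i0, hi0⟩
          rw [ih _ hlt α hαA rfl, zero_smul, map_zero]
        · push_neg at hle
          obtain ⟨i, hi⟩ := hle
          rw [smul_eq_C_mul, map_mul, eval_C, eval_newton_eq_zero p ⟨i, hi⟩, mul_zero]
      rw [Finset.sum_eq_single β hterm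
        (fun h => by rw [Finsupp.notMem_support_iff.mp h, zero_smul, map_zero])] at h0
      rw [smul_eq_C_mul, map_mul, eval_C] at h0
      exact (mul_eq_zero.mp h0).resolve_right (eval_newton_self_ne_zero p hp hβ)
  ext β
  by_cases hβ : β ∈ A
  · exact main _ β hβ rfl
  · simp only [Finsupp.coe_zero, Pi.zero_apply]
    exact Finsupp.notMem_support_iff.mp (fun h => hβ (hsupp h))

lemma newton_span_eq {A : Finset (Fin m → ℕ)} (hA : CompleteIdx A)
    (p : Fin m → ℕ → ℝ) (hp : GenDistinct A p) :
    Submodule.span ℝ (newton p '' ↑A) = PiA m A := by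
  have hle : Submodule.span ℝ (newton p '' ↑A) ≤ PiA m A := by
    rw [Submodule.span_le]
    rintro _ ⟨α, hα, rfl⟩
    exact newton_mem_PiA hA p hα
  haveI : FiniteDimensional ℝ (PiA m A) := by
    unfold PiA
    exact FiniteDimensional.span_of_finite ℝ (A.finite_toSet.image _)
  refine Submodule.eq_of_le_of_finrank_le hle ?_
  have hind : LinearIndependent ℝ ((newton p) ∘ ((↑) : (↑A : Set (Fin m → ℕ)) → _)) := by
    rw [linearIndependent_comp_subtype_iff, linearIndepOn_iff]
    intro l hl hl0
    exact key_triangular p hp l ((Finsupp.mem_supported ℝ l).mp hl)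
      (fun β _ => by rw [hl0, map_zero])
  have hrange : newton p '' ↑A = Set.range (newton p ∘ ((↑) : (↑A : Set (Fin m → ℕ)) → _)) := by
    rw [Set.range_comp, Subtype.range_coe]
  have hAcard : Fintype.card (↑A : Set (Fin m → ℕ)) = A.card := by simp
  rw [hrange, finrank_span_eq_card hind, hAcard]
  have himg : PiA m A = Submodule.span ℝ
      (↑(A.image fun α : Fin m → ℕ => ∏ i, (X i : MvPolynomial (Fin m) ℝ) ^ α i) :
        Set (MvPolynomial (Fin m) ℝ)) := by
    unfold PiA
    rw [Finset.coe_image]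
  rw [himg]
  exact (finrank_span_finset_le_card _).trans (Finset.card_image_le)

end Aux

/-- For a complete set of multi-indices `A` and generating nodes with
pairwise distinct entries, the node set `P_A = { (p_{α₁,1},…,p_{α_m,m}) : α ∈ A }`
is unisolvent with respect to `Π_A`. -/
theorem grid_unisolvent (m : ℕ) (A : Finset (Fin m → ℕ))
    (hA : CompleteIdx A) (p : Fin m → ℕ → ℝ) (hp : GenDistinct A p) :
    Unisolvent (node p '' ↑A) (PiA m A) := by
  intro Q hQ hvan
  rw [← newton_span_eq hA p hp] at hQ
  obtain ⟨l, hl, rfl⟩ := (Finsupp.mem_span_image_iff_linearCombination ℝ).mp hQ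
  rw [key_triangular p hp l ((Finsupp.mem_supported ℝ l).mp hl)
    (fun β hβ => hvan _ ⟨β, hβ, rfl⟩), map_zero]

end
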